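/- Fix k ≥ 1. The set of quadruples (l, m, a) with m ∈ Z_{≥0}^n, a ∈ Z_{≥1}^n, 0 ≤ l ≤ n, satisfying simultaneously: (1A) l > 0; (2A) condition PF_{k,1} holds for ρ(m,a) if l < n; (1B) l < n; (2B) condition NPF_{k,n−1} holds for ρ^{-1}(m,a) if l > 0; (3B) m₁ > 0 — is empty. -/
import Mathlib


namespace Stmt14

/-- `PF_{k,i}` (parking function at `i`, 0-indexed: compares positions `i` and `i+1`):
`m_{i+1} ≤ m_i + k - 1`, or `m_{i+1} = m_i + k` and `a_{i+1} > a_i`. -/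
def PF (k : ℕ) (m a : ℕ → ℕ) (i : ℕ) : Prop :=
  m (i + 1) + 1 ≤ m i + k ∨ (m (i + 1) = m i + k ∧ a i < a (i + 1))

/-- `NPF_{k,i}`, the negation of `PF_{k,i}`:
`m_{i+1} > m_i + k`, or `m_{i+1} = m_i + k` and `a_{i+1} ≤ a_i`. -/
def NPF (k : ℕ) (m a : ℕ → ℕ) (i : ℕ) : Prop :=
  m i + k < m (i + 1) ∨ (m (i + 1) = m i + k ∧ a (i + 1) ≤ a i)

/-- The rotation `ρ(m,a)`, on sequences of length `n` (0-indexed):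
`ρ(m)_0 = m_{n-1} + 1`, `ρ(m)_i = m_{i-1}`; `ρ(a)_0 = a_{n-1}`, `ρ(a)_i = a_{i-1}`. -/
def rotm (n : ℕ) (m : ℕ → ℕ) : ℕ → ℕ := fun i => if i = 0 then m (n - 1) + 1 else m (i - 1)

def rota (n : ℕ) (a : ℕ → ℕ) : ℕ → ℕ := fun i => if i = 0 then a (n - 1) else a (i - 1)

/-- The inverse rotation `ρ⁻¹(m,a)`:
`ρ⁻¹(m)_{n-1} = m_0 - 1`, `ρ⁻¹(m)_i = m_{i+1}`; similarly for `a` without the `-1`. -/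
def irotm (n : ℕ) (m : ℕ → ℕ) : ℕ → ℕ := fun i => if i = n - 1 then m 0 - 1 else m (i + 1)

def irota (n : ℕ) (a : ℕ → ℕ) : ℕ → ℕ := fun i => if i = n - 1 then a 0 else a (i + 1)

/-- The set of triples `(l, m, a)` with `0 ≤ l ≤ n` satisfying simultaneously
(1A) `l > 0`; (2A) `PF_{k,1}` for `ρ(m,a)` if `l < n`; (1B) `l < n`;
(2B) `NPF_{k,n-1}` for `ρ⁻¹(m,a)` if `l > 0`; (3B) `m₁ > 0` — is empty. -/
theorem stmt_14 (n k : ℕ) (hn : 1 ≤ n) (hk : 1 ≤ k) (l : ℕ) (hl : l ≤ n) (m a : ℕ → ℕ)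
    (h1A : 0 < l)
    (h2A : l < n → PF k (rotm n m) (rota n a) 0)
    (h1B : l < n)
    (h2B : 0 < l → NPF k (irotm n m) (irota n a) (n - 2))
    (h3B : 0 < m 0) :
    False := by
  have hA := h2A h1B
  have hB := h2B h1A
  rcases Nat.lt_or_ge n 2 with h2 | h2
  · omega
  · simp only [PF, NPF, rotm, rota, irotm, irota] at hA hB
    have e1 : n - 2 + 1 = n - 1 := by omega
    have e2 : n - 2 ≠ n - 1 := by omega
    simp [e1, e2] at hB
    norm_num at hA
    omega

end Stmt14
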